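/- Let X ∈ ℝ^{n×p} with XᵀX invertible, y ∈ ℝ^n; for i = 1,…,N let Δ_i, θ_i^{(1)} ∈ ℝ^p, g_i = 2XᵀX(θ_i^{(1)} − Δ_i) − 2Xᵀy, y_i' = −Xθ_i^{(1)} + y + XΔ_i, and Z_i = θ_i^{(1)} − Δ_i − (XᵀX)⁻¹Xᵀy. Define l^total(B) = (1/N)Σ_{i=1}^N ‖XBg_i + y_i'‖². If {Z_1,…,Z_N} spans ℝ^p, then l^total is strongly convex on ℝ^{p×p}: there exists m > 0 such that B ↦ l^total(B) − (m/2)‖B‖_F² is convex, where ‖·‖_F is the Frobenius norm. -/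
import Mathlib

open Finset Matrix

attribute [local instance] Matrix.frobeniusNormedAddCommGroup Matrix.frobeniusNormedSpace

lemma sq_convex_identity (a b s t : ℝ) (hab : a + b = 1) :
    (a * s + b * t) ^ 2 = a * s ^ 2 + b * t ^ 2 - a * b * (s - t) ^ 2 := by
  have hb : b = 1 - a := by linarith
  subst hb; ring

lemma fro_norm_sq {p q : ℕ} (A : Matrix (Fin p) (Fin q) ℝ) :
    ‖A‖ ^ 2 = ∑ i, ∑ j, (A i j) ^ 2 := by
  have h : (0 : ℝ) ≤ ∑ i, ∑ j, (A i j) ^ 2 := by positivity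
  rw [Matrix.frobenius_norm_def]
  have : ∀ i j, ‖A i j‖ ^ (2 : ℝ) = (A i j) ^ 2 := by
    intro i j
    rw [show (2:ℝ) = ((2:ℕ):ℝ) by norm_num, Real.rpow_natCast, Real.norm_eq_abs, sq_abs]
  simp_rw [this]
  rw [← Real.rpow_natCast (_ ^ (1/2 : ℝ)) 2, ← Real.rpow_mul h]
  norm_num

theorem ltotal_strongly_convex {n p N : ℕ} (X : Matrix (Fin n) (Fin p) ℝ)
    (hX : IsUnit (Xᵀ * X)) (y : Fin n → ℝ) (Δ θ₁ : Fin N → Fin p → ℝ)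
    (g : Fin N → Fin p → ℝ)
    (hg : ∀ i, g i = (2 : ℝ) • ((Xᵀ * X) *ᵥ (θ₁ i - Δ i)) - (2 : ℝ) • (Xᵀ *ᵥ y))
    (y' : Fin N → Fin n → ℝ)
    (hy' : ∀ i, y' i = -(X *ᵥ θ₁ i) + y + X *ᵥ Δ i)
    (Z : Fin N → Fin p → ℝ)
    (hZ : ∀ i, Z i = θ₁ i - Δ i - (Xᵀ * X)⁻¹ *ᵥ (Xᵀ *ᵥ y))
    (hspan : Submodule.span ℝ (Set.range Z) = ⊤)
    (ltotal : Matrix (Fin p) (Fin p) ℝ → ℝ)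
    (hltotal : ∀ B, ltotal B = (1 / (N : ℝ)) * ∑ i, ∑ j, ((X *ᵥ (B *ᵥ g i) + y' i) j) ^ 2) :
    ∃ m > (0 : ℝ), ConvexOn ℝ Set.univ
      (fun B : Matrix (Fin p) (Fin p) ℝ => ltotal B - (m / 2) * ‖B‖ ^ 2) := by
  classical
  -- trivial case p = 0
  rcases Nat.eq_zero_or_pos p with hp | hp
  · subst hp
    refine ⟨1, one_pos, ?_⟩
    refine ⟨convex_univ, ?_⟩
    intro B _ C _ a b ha hb hab
    have hBC : B = C := by ext i j; exact absurd i.2 (by omega)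
    subst hBC
    have h1 : a • B + b • B = B := by rw [← add_smul, hab, one_smul]
    rw [h1]
    simp only [smul_eq_mul]
    have h2 : a * (ltotal B - 1 / 2 * ‖B‖ ^ 2) + b * (ltotal B - 1 / 2 * ‖B‖ ^ 2)
        = ltotal B - 1 / 2 * ‖B‖ ^ 2 := by
      rw [← add_mul, hab, one_mul]
    linarith [h2]
  -- now p > 0
  have hdet : IsUnit (Xᵀ * X).det := (Matrix.isUnit_iff_isUnit_det _).mp hX
  have hNpos : 0 < N := by
    by_contra hN
    have hN0 : N = 0 := by omega
    subst hN0
    have : Set.range Z = ∅ := Set.range_eq_empty Z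
    rw [this, Submodule.span_empty] at hspan
    have : (1 : Fin p → ℝ) = 0 := by
      have := hspan ▸ Submodule.mem_top (R := ℝ) (M := Fin p → ℝ) (x := 1)
      simpa using this
    have := congrFun this ⟨0, hp⟩
    norm_num at this
  have hNR : (0 : ℝ) < N := by exact_mod_cast hNpos
  -- the quadratic form
  set Q : Matrix (Fin p) (Fin p) ℝ → ℝ := fun D => ∑ i, ∑ j, ((X *ᵥ (D *ᵥ g i)) j) ^ 2 with hQdef
  -- linearity of the inner map
  have hlin : ∀ (a b : ℝ) (B C : Matrix (Fin p) (Fin p) ℝ) (i : Fin N) (j : Fin n),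
      (X *ᵥ ((a • B + b • C) *ᵥ g i)) j
        = a * (X *ᵥ (B *ᵥ g i)) j + b * (X *ᵥ (C *ᵥ g i)) j := by
    intro a b B C i j
    rw [Matrix.add_mulVec, Matrix.smul_mulVec, Matrix.smul_mulVec,
      Matrix.mulVec_add, Matrix.mulVec_smul, Matrix.mulVec_smul]
    simp
  have hsub : ∀ (B C : Matrix (Fin p) (Fin p) ℝ) (i : Fin N) (j : Fin n),
      (X *ᵥ ((B - C) *ᵥ g i)) j = (X *ᵥ (B *ᵥ g i)) j - (X *ᵥ (C *ᵥ g i)) j := by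
    intro B C i j
    rw [Matrix.sub_mulVec, Matrix.mulVec_sub]
    simp
  -- Q is nonneg
  have hQnonneg : ∀ D : Matrix (Fin p) (Fin p) ℝ, 0 ≤ Q D := by intro D; positivity
  -- Q homogeneity
  have hQsmul : ∀ (c : ℝ) (D : Matrix (Fin p) (Fin p) ℝ), Q (c • D) = c ^ 2 * Q D := by
    intro c D
    simp only [hQdef]
    rw [Finset.mul_sum]
    refine Finset.sum_congr rfl fun i _ => ?_
    rw [Finset.mul_sum]
    refine Finset.sum_congr rfl fun j _ => ?_
    rw [Matrix.smul_mulVec, Matrix.mulVec_smul]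
    simp [mul_pow]
  -- Q positive on nonzero
  have hQpos : ∀ D : Matrix (Fin p) (Fin p) ℝ, D ≠ 0 → 0 < Q D := by
    intro D hD
    rcases lt_or_eq_of_le (hQnonneg D) with h | h
    · exact h
    exfalso
    -- Q D = 0
    have hz : ∀ i (j : Fin n), (X *ᵥ (D *ᵥ g i)) j = 0 := by
      intro i j
      have h1 : ∑ i, ∑ j, ((X *ᵥ (D *ᵥ g i)) j) ^ 2 = 0 := h.symm
      have h2 : ∀ i ∈ Finset.univ, (0:ℝ) ≤ ∑ j, ((X *ᵥ (D *ᵥ g i)) j) ^ 2 := by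
        intro i _; positivity
      have h3 := (Finset.sum_eq_zero_iff_of_nonneg h2).mp h1 i (Finset.mem_univ i)
      have h4 : ∀ j ∈ Finset.univ, (0:ℝ) ≤ ((X *ᵥ (D *ᵥ g i)) j) ^ 2 := by
        intro j _; positivity
      have h5 := (Finset.sum_eq_zero_iff_of_nonneg h4).mp h3 j (Finset.mem_univ j)
      exact pow_eq_zero_iff (by norm_num) |>.mp h5
    -- hence D *ᵥ g i = 0
    have hDg : ∀ i, D *ᵥ g i = 0 := by
      intro i
      have hXv : X *ᵥ (D *ᵥ g i) = 0 := funext (hz i)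
      have : (Xᵀ * X) *ᵥ (D *ᵥ g i) = 0 := by
        rw [← Matrix.mulVec_mulVec, hXv, Matrix.mulVec_zero]
      calc D *ᵥ g i = (Xᵀ * X)⁻¹ *ᵥ ((Xᵀ * X) *ᵥ (D *ᵥ g i)) := by
            rw [Matrix.mulVec_mulVec, Matrix.nonsing_inv_mul _ hdet, Matrix.one_mulVec]
        _ = 0 := by rw [this, Matrix.mulVec_zero]
    -- g i = 2 • ((Xᵀ*X) *ᵥ Z i)
    have hgZ : ∀ i, g i = (2:ℝ) • ((Xᵀ * X) *ᵥ Z i) := by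
      intro i
      have h1 : (Xᵀ * X) *ᵥ ((Xᵀ * X)⁻¹ *ᵥ (Xᵀ *ᵥ y)) = Xᵀ *ᵥ y := by
        rw [Matrix.mulVec_mulVec, Matrix.mul_nonsing_inv _ hdet, Matrix.one_mulVec]
      rw [hg i, hZ i]
      conv_rhs => rw [Matrix.mulVec_sub, h1]
      rw [smul_sub]
    -- so (D * (Xᵀ*X)) *ᵥ Z i = 0
    have hM : ∀ i, (D * (Xᵀ * X)) *ᵥ Z i = 0 := by
      intro i
      have := hDg i
      rw [hgZ i, Matrix.mulVec_smul] at this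
      have h2 : D *ᵥ ((Xᵀ * X) *ᵥ Z i) = 0 := by
        have := congrArg (fun v => (2:ℝ)⁻¹ • v) this
        simpa [smul_smul] using this
      rw [← Matrix.mulVec_mulVec]
      exact h2
    -- kernel argument
    have hker : ∀ v : Fin p → ℝ, (D * (Xᵀ * X)) *ᵥ v = 0 := by
      intro v
      have hv : v ∈ Submodule.span ℝ (Set.range Z) := hspan ▸ Submodule.mem_top
      have hle : Submodule.span ℝ (Set.range Z) ≤
          LinearMap.ker (Matrix.mulVecLin (D * (Xᵀ * X))) := by
        rw [Submodule.span_le]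
        rintro _ ⟨i, rfl⟩
        rw [SetLike.mem_coe, LinearMap.mem_ker, Matrix.mulVecLin_apply]
        exact hM i
      have h2 := hle hv
      rw [LinearMap.mem_ker, Matrix.mulVecLin_apply] at h2
      exact h2
    have hM0 : D * (Xᵀ * X) = 0 := by
      ext i j
      have := congrFun (hker (Pi.single j 1)) i
      simpa using this
    have hfin : D = 0 := by
      have h2 : D * ((Xᵀ * X) * (Xᵀ * X)⁻¹) = 0 := by
        rw [← Matrix.mul_assoc, hM0, Matrix.zero_mul]
      rwa [Matrix.mul_nonsing_inv _ hdet, Matrix.mul_one] at h2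
    exact hD hfin
  -- continuity of Q
  have hQcont : Continuous Q := by
    apply continuous_finset_sum
    intro i _
    apply continuous_finset_sum
    intro j _
    have hc : Continuous fun D : Matrix (Fin p) (Fin p) ℝ => (X *ᵥ (D *ᵥ g i)) j :=
      LinearMap.continuous_of_finiteDimensional
        ({ toFun := fun D => (X *ᵥ (D *ᵥ g i)) j
           map_add' := by
             intro B C
             show (X *ᵥ ((B + C) *ᵥ g i)) j = _
             rw [Matrix.add_mulVec, Matrix.mulVec_add]; simp
           map_smul' := by
             intro c B
             show (X *ᵥ ((c • B) *ᵥ g i)) j = _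
             rw [Matrix.smul_mulVec, Matrix.mulVec_smul]; simp } :
          Matrix (Fin p) (Fin p) ℝ →ₗ[ℝ] ℝ)
    exact hc.pow 2
  -- sphere compact nonempty
  haveI : Nontrivial (Matrix (Fin p) (Fin p) ℝ) := by
    refine ⟨0, fun _ _ => 1, fun h => ?_⟩
    have := congrFun (congrFun h ⟨0, hp⟩) ⟨0, hp⟩
    norm_num at this
  obtain ⟨D₀, hD₀S, hmin⟩ :=
    (isCompact_sphere (0 : Matrix (Fin p) (Fin p) ℝ) 1).exists_isMinOn
      (by
        obtain ⟨x, hx⟩ := exists_norm_eq (Matrix (Fin p) (Fin p) ℝ) (zero_le_one)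
        exact ⟨x, by simpa [Metric.mem_sphere, dist_eq_norm] using hx⟩)
      hQcont.continuousOn
  have hD₀norm : ‖D₀‖ = 1 := by simpa [Metric.mem_sphere, dist_eq_norm] using hD₀S
  have hD₀ne : D₀ ≠ 0 := by
    intro h; rw [h, norm_zero] at hD₀norm; norm_num at hD₀norm
  have hQD₀ : 0 < Q D₀ := hQpos D₀ hD₀ne
  refine ⟨(2 / N) * Q D₀, by positivity, ?_⟩
  -- the key bound
  have hbound : ∀ D : Matrix (Fin p) (Fin p) ℝ, ((2 / N) * Q D₀ / 2) * ‖D‖ ^ 2 ≤ (1 / N) * Q D := by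
    intro D
    rcases eq_or_ne D 0 with rfl | hD
    · have h0 : Q (0 : Matrix (Fin p) (Fin p) ℝ) = 0 := by
        simp only [hQdef]
        refine Finset.sum_eq_zero fun i _ => Finset.sum_eq_zero fun j _ => ?_
        rw [Matrix.zero_mulVec, Matrix.mulVec_zero]
        simp
      simp [h0]
    · have hr : 0 < ‖D‖ := norm_pos_iff.mpr hD
      set D' : Matrix (Fin p) (Fin p) ℝ := ‖D‖⁻¹ • D with hD'def
      have hD'S : D' ∈ Metric.sphere (0 : Matrix (Fin p) (Fin p) ℝ) 1 := by
        simp [Metric.mem_sphere, dist_eq_norm, hD'def, norm_smul, abs_of_pos (inv_pos.mpr hr),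
          inv_mul_cancel₀ hr.ne']
      have h1 : Q D₀ ≤ Q D' := hmin hD'S
      have hDeq : D = ‖D‖ • D' := by
        rw [hD'def, smul_smul, mul_inv_cancel₀ hr.ne', one_smul]
      have h2 : Q D = ‖D‖ ^ 2 * Q D' := by
        conv_lhs => rw [hDeq, hQsmul]
      rw [h2]
      have h6 : Q D₀ * ‖D‖ ^ 2 ≤ Q D' * ‖D‖ ^ 2 :=
        mul_le_mul_of_nonneg_right h1 (sq_nonneg _)
      have h7 : (0:ℝ) ≤ 1 / (N:ℝ) := by positivity
      have e : 2 / (N:ℝ) * Q D₀ / 2 * ‖D‖ ^ 2 = 1 / (N:ℝ) * (Q D₀ * ‖D‖ ^ 2) := by ring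
      rw [e]
      nlinarith [mul_le_mul_of_nonneg_left h6 h7]
  -- now convexity
  refine ⟨convex_univ, ?_⟩
  intro B _ C _ a b ha hb hab
  simp only [smul_eq_mul]
  -- expand ltotal at the combination
  have hexp : ltotal (a • B + b • C)
      = a * ltotal B + b * ltotal C - (1 / N) * (a * b * Q (B - C)) := by
    rw [hltotal, hltotal, hltotal]
    have hpt : ∀ (i : Fin N) (j : Fin n),
        ((X *ᵥ ((a • B + b • C) *ᵥ g i) + y' i) j) ^ 2
          = a * ((X *ᵥ (B *ᵥ g i) + y' i) j) ^ 2 + b * ((X *ᵥ (C *ᵥ g i) + y' i) j) ^ 2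
            - a * b * ((X *ᵥ ((B - C) *ᵥ g i)) j) ^ 2 := by
      intro i j
      have e1 : (X *ᵥ ((a • B + b • C) *ᵥ g i) + y' i) j
          = a * ((X *ᵥ (B *ᵥ g i) + y' i) j) + b * ((X *ᵥ (C *ᵥ g i) + y' i) j) := by
        simp only [Pi.add_apply]
        rw [hlin a b B C i j]
        have : a * ((X *ᵥ (B *ᵥ g i)) j + y' i j) + b * ((X *ᵥ (C *ᵥ g i)) j + y' i j)
            = a * (X *ᵥ (B *ᵥ g i)) j + b * (X *ᵥ (C *ᵥ g i)) j + (a + b) * y' i j := by ring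
        rw [this, hab, one_mul]
      rw [e1, sq_convex_identity _ _ _ _ hab, hsub B C i j]
      simp only [Pi.add_apply]
      ring
    calc (1 / (N:ℝ)) * ∑ i, ∑ j, ((X *ᵥ ((a • B + b • C) *ᵥ g i) + y' i) j) ^ 2
        = (1 / (N:ℝ)) * ∑ i, ∑ j,
            (a * ((X *ᵥ (B *ᵥ g i) + y' i) j) ^ 2 + b * ((X *ᵥ (C *ᵥ g i) + y' i) j) ^ 2
              - a * b * ((X *ᵥ ((B - C) *ᵥ g i)) j) ^ 2) := by
          congr 1
          exact Finset.sum_congr rfl fun i _ => Finset.sum_congr rfl fun j _ => hpt i j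
      _ = a * ((1/(N:ℝ)) * ∑ i, ∑ j, ((X *ᵥ (B *ᵥ g i) + y' i) j) ^ 2)
          + b * ((1/(N:ℝ)) * ∑ i, ∑ j, ((X *ᵥ (C *ᵥ g i) + y' i) j) ^ 2)
          - (1 / N) * (a * b * Q (B - C)) := by
          simp only [hQdef, Finset.sum_sub_distrib, Finset.sum_add_distrib, ← Finset.mul_sum]
          ring
  have hnorm : ‖a • B + b • C‖ ^ 2 = a * ‖B‖ ^ 2 + b * ‖C‖ ^ 2 - a * b * ‖B - C‖ ^ 2 := by
    rw [fro_norm_sq, fro_norm_sq, fro_norm_sq, fro_norm_sq]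
    have hpt : ∀ (i j : Fin p),
        ((a • B + b • C) i j) ^ 2
          = a * (B i j) ^ 2 + b * (C i j) ^ 2 - a * b * ((B - C) i j) ^ 2 := by
      intro i j
      have e1 : (a • B + b • C) i j = a * B i j + b * C i j := by
        simp [Matrix.add_apply, Matrix.smul_apply, smul_eq_mul]
      have e2 : (B - C) i j = B i j - C i j := by simp [Matrix.sub_apply]
      rw [e1, e2, sq_convex_identity _ _ _ _ hab]
    calc ∑ i, ∑ j, ((a • B + b • C) i j) ^ 2
        = ∑ i, ∑ j, (a * (B i j) ^ 2 + b * (C i j) ^ 2 - a * b * ((B - C) i j) ^ 2) :=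
          Finset.sum_congr rfl fun i _ => Finset.sum_congr rfl fun j _ => hpt i j
      _ = a * ∑ i, ∑ j, (B i j) ^ 2 + b * ∑ i, ∑ j, (C i j) ^ 2
          - a * b * ∑ i, ∑ j, ((B - C) i j) ^ 2 := by
          simp only [Finset.sum_sub_distrib, Finset.sum_add_distrib, ← Finset.mul_sum]
  rw [hexp, hnorm]
  have hkey := hbound (B - C)
  nlinarith [mul_nonneg ha hb, hQnonneg (B - C), norm_nonneg (B - C),
    mul_nonneg (mul_nonneg ha hb) (sub_nonneg.mpr hkey)]
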